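/- Let d > 1, m > 0, z₀ > 0, 0 < η < 1, and x₁ > x₀ be reals. Set z_n = η^n·z₀, c(z) = m·z^d, c₀ = m·z₀^d, and let t : ℕ → ℝ with t₀ = 0 satisfy (x₁ − x₀)/c(z_n) ≤ t_{n+1} − t_n ≤ (x₁ − x₀)/c(z_{n+1}) for all n ≥ 0. Then for all n ≥ 1: z₀·( 1 + (t_n·c₀/(x₁ − x₀))·(η^{−d} − 1) )^{−1/d} ≤ z_n ≤ z₀·( 1 + (t_n·c₀/(x₁ − x₀))·(1 − η^d) )^{−1/d}. In particular z_n = O(1)·(1 + t_n)^{−1/d}. -/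

import Mathlib

/-- Rate of approach to vacuum at the bifurcation point `ζ = 0`: the amplitudes
`z_n = η^n·z₀` satisfy two-sided bounds in terms of the reflection times `t_n`,
so in particular `z_n = O(1)·(1 + t_n)^(−1/d)`. -/
theorem vacuum_approach_rate (d m z₀ η x₀ x₁ : ℝ) (hd : 1 < d) (hm : 0 < m)
    (hz₀ : 0 < z₀) (hη₀ : 0 < η) (hη₁ : η < 1) (hx : x₀ < x₁)
    (z : ℕ → ℝ) (hz : ∀ n, z n = η ^ n * z₀)
    (c : ℝ → ℝ) (hc : ∀ y, c y = m * y ^ d) (c₀ : ℝ) (hc₀ : c₀ = m * z₀ ^ d)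
    (t : ℕ → ℝ) (ht0 : t 0 = 0)
    (ht : ∀ n, (x₁ - x₀) / c (z n) ≤ t (n + 1) - t n ∧
               t (n + 1) - t n ≤ (x₁ - x₀) / c (z (n + 1))) :
    (∀ n ≥ 1,
      z₀ * (1 + (t n * c₀ / (x₁ - x₀)) * (η ^ (-d) - 1)) ^ (-1 / d) ≤ z n
        ∧ z n ≤ z₀ * (1 + (t n * c₀ / (x₁ - x₀)) * (1 - η ^ d)) ^ (-1 / d))
      ∧ ∃ C > 0, ∀ n ≥ 1, z n ≤ C * (1 + t n) ^ (-1 / d) := by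
  have hd0 : (0:ℝ) < d := by linarith
  set L : ℝ := x₁ - x₀ with hLdef
  have hL : 0 < L := by simp [hLdef]; linarith
  set r : ℝ := η ^ d with hrdef
  set q : ℝ := η ^ (-d) with hqdef
  have hr0 : 0 < r := Real.rpow_pos_of_pos hη₀ d
  have hr1 : r < 1 := Real.rpow_lt_one hη₀.le hη₁ hd0
  have hqr : q = r⁻¹ := by
    rw [hqdef, hrdef, Real.rpow_neg hη₀.le]
  have hq0 : 0 < q := by rw [hqr]; positivity
  have hq1 : 1 < q := by rw [hqr]; exact (one_lt_inv₀ hr0).mpr hr1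
  have hc₀0 : 0 < c₀ := by rw [hc₀]; positivity
  -- powers of r and q versus η
  have hpow : ∀ n : ℕ, ((η ^ n : ℝ)) ^ d = r ^ n := by
    intro n
    rw [hrdef, ← Real.rpow_natCast η n, ← Real.rpow_mul hη₀.le,
      mul_comm, Real.rpow_mul hη₀.le, Real.rpow_natCast]
  have hqn : ∀ n : ℕ, q ^ n = (r ^ n)⁻¹ := by
    intro n; rw [hqr, inv_pow]
  have hczn : ∀ n : ℕ, c (z n) = c₀ * r ^ n := by
    intro n
    rw [hc (z n), hz n, Real.mul_rpow (by positivity) hz₀.le, hpow, hc₀]; ring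
  have hstep : ∀ n : ℕ, L / c (z n) = L / c₀ * q ^ n := by
    intro n
    rw [hczn, hqn]
    field_simp
  -- key induction: bounds on t n
  have hq1' : q - 1 ≠ 0 := by intro h; nlinarith
  have key : ∀ n : ℕ, L / c₀ * ((q ^ n - 1) / (q - 1)) ≤ t n ∧
      t n ≤ L / c₀ * (q * (q ^ n - 1) / (q - 1)) := by
    intro n
    induction n with
    | zero => simp [ht0]
    | succ n ih =>
      obtain ⟨ih1, ih2⟩ := ih
      obtain ⟨h1, h2⟩ := ht n
      rw [hstep] at h1
      rw [hstep] at h2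
      constructor
      · have : L / c₀ * ((q ^ n - 1) / (q - 1)) + L / c₀ * q ^ n ≤ t (n + 1) := by
          linarith
        calc L / c₀ * ((q ^ (n+1) - 1) / (q - 1))
            = L / c₀ * ((q ^ n - 1) / (q - 1)) + L / c₀ * q ^ n := by
              field_simp; ring
          _ ≤ t (n + 1) := this
      · have : t (n + 1) ≤ L / c₀ * (q * (q ^ n - 1) / (q - 1)) + L / c₀ * q ^ (n+1) := by
          linarith
        calc t (n + 1) ≤ L / c₀ * (q * (q ^ n - 1) / (q - 1)) + L / c₀ * q ^ (n+1) := this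
          _ = L / c₀ * (q * (q ^ (n+1) - 1) / (q - 1)) := by field_simp; ring
  have hqnge1 : ∀ n : ℕ, (1:ℝ) ≤ q ^ n := fun n => one_le_pow₀ hq1.le
  have htpos : ∀ n : ℕ, 0 ≤ t n := by
    intro n
    refine le_trans ?_ (key n).1
    have := hqnge1 n
    have h1 : (0:ℝ) ≤ (q ^ n - 1) / (q - 1) := by
      apply div_nonneg <;> linarith
    positivity
  -- express z n via q
  have hzn : ∀ n : ℕ, z n = z₀ * (q ^ n) ^ (-1/d) := by
    intro n
    have h1 : (q:ℝ) ^ n = η ^ ((-d) * (n:ℝ)) := by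
      rw [hqdef, ← Real.rpow_natCast (η ^ (-d)) n, ← Real.rpow_mul hη₀.le]
    rw [hz n, h1, ← Real.rpow_mul hη₀.le, ← Real.rpow_natCast η n]
    rw [show -d * (n:ℝ) * (-1/d) = (n:ℝ) by field_simp]
    ring
  -- the two-sided bound
  have main : ∀ n : ℕ,
      z₀ * (1 + (t n * c₀ / L) * (q - 1)) ^ (-1 / d) ≤ z n ∧
      z n ≤ z₀ * (1 + (t n * c₀ / L) * (1 - r)) ^ (-1 / d) := by
    intro n
    set T : ℝ := t n * c₀ / L with hTdef
    have hT0 : 0 ≤ T := by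
      apply div_nonneg (mul_nonneg (htpos n) hc₀0.le) hL.le
    have hTlow : (q ^ n - 1) / (q - 1) ≤ T := by
      have h := (key n).1
      rw [hTdef, le_div_iff₀ hL]
      calc (q ^ n - 1) / (q - 1) * L = (L / c₀ * ((q ^ n - 1) / (q - 1))) * c₀ := by
            field_simp
        _ ≤ t n * c₀ := by gcongr
    have hTup : T ≤ q * (q ^ n - 1) / (q - 1) := by
      have h := (key n).2
      rw [hTdef, div_le_iff₀ hL]
      calc t n * c₀ ≤ (L / c₀ * (q * (q ^ n - 1) / (q - 1))) * c₀ := by gcongr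
        _ = q * (q ^ n - 1) / (q - 1) * L := by field_simp
    have hq0n : (0:ℝ) < q ^ n := by positivity
    constructor
    · -- lower bound
      have h1 : q ^ n ≤ 1 + T * (q - 1) := by
        have : (q ^ n - 1) / (q - 1) * (q - 1) ≤ T * (q - 1) := by
          gcongr
        rw [div_mul_cancel₀ _ hq1'] at this
        linarith
      rw [hzn n]
      exact mul_le_mul_of_nonneg_left
        (Real.rpow_le_rpow_of_nonpos hq0n h1
          (by rw [neg_div]; exact neg_nonpos.mpr (by positivity))) hz₀.le
    · -- upper bound
      have h2 : 1 + T * (1 - r) ≤ q ^ n := by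
        have hqineq : q * (1 - r) = q - 1 := by
          rw [hqr]; field_simp
        have : T * (1 - r) ≤ q * (q ^ n - 1) / (q - 1) * (1 - r) := by
          gcongr
        have heq : q * (q ^ n - 1) / (q - 1) * (1 - r) = q ^ n - 1 := by
          calc q * (q ^ n - 1) / (q - 1) * (1 - r)
              = (q ^ n - 1) * (q * (1 - r)) / (q - 1) := by ring
            _ = (q ^ n - 1) * (q - 1) / (q - 1) := by rw [hqineq]
            _ = q ^ n - 1 := by field_simp
        rw [heq] at this
        linarith
      have hpos : (0:ℝ) < 1 + T * (1 - r) := by nlinarith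
      rw [hzn n]
      exact mul_le_mul_of_nonneg_left
        (Real.rpow_le_rpow_of_nonpos hpos h2
          (by rw [neg_div]; exact neg_nonpos.mpr (by positivity))) hz₀.le
  refine ⟨fun n _ => main n, ?_⟩
  -- asymptotic bound
  set a : ℝ := c₀ * (1 - r) / L with hadef
  have ha0 : 0 < a := by
    have : (0:ℝ) < 1 - r := by linarith
    rw [hadef]; positivity
  set b : ℝ := min a 1 with hbdef
  have hb0 : 0 < b := lt_min ha0 one_pos
  have hb1 : b ≤ 1 := min_le_right a 1
  refine ⟨z₀ * b ^ (-1/d), mul_pos hz₀ (Real.rpow_pos_of_pos hb0 _), fun n _ => ?_⟩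
  have h1 := (main n).2
  have heq : 1 + (t n * c₀ / L) * (1 - r) = 1 + t n * a := by
    rw [hadef]; ring
  rw [heq] at h1
  have h2 : b * (1 + t n) ≤ 1 + t n * a := by
    have hba : b ≤ a := min_le_left a 1
    have := htpos n
    nlinarith
  have hb' : (0:ℝ) < b * (1 + t n) := by
    have := htpos n; positivity
  have h3 : (1 + t n * a) ^ (-1/d) ≤ (b * (1 + t n)) ^ (-1/d) :=
    Real.rpow_le_rpow_of_nonpos hb' h2 (by rw [neg_div]; simp; positivity)
  have h4 : (b * (1 + t n)) ^ (-1/d) = b ^ (-1/d) * (1 + t n) ^ (-1/d) :=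
    Real.mul_rpow hb0.le (by have := htpos n; linarith)
  calc z n ≤ z₀ * (1 + t n * a) ^ (-1/d) := h1
    _ ≤ z₀ * (b ^ (-1/d) * (1 + t n) ^ (-1/d)) := by
        rw [← h4]; gcongr
    _ = z₀ * b ^ (-1/d) * (1 + t n) ^ (-1/d) := by ring
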